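/- The Cartesian product K_4 □ P_2 is not a minor of the Cartesian product K_{1,3} □ P_3. -/

import Mathlib

/-- `H` is a minor of `G`: there is an assignment of pairwise disjoint, connected,
nonempty branch sets in `G` to the vertices of `H`, with an edge of `G` between the
branch sets of any two adjacent vertices of `H`. -/
def SimpleGraph.IsMinorOf {W V : Type*} (H : SimpleGraph W) (G : SimpleGraph V) : Prop :=
  ∃ φ : W → Set V,
    (∀ w, (G.induce (φ w)).Connected) ∧
    (Pairwise fun w w' => Disjoint (φ w) (φ w')) ∧
    ∀ ⦃w w'⦄, H.Adj w w' → ∃ a ∈ φ w, ∃ b ∈ φ w', G.Adj a b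

private lemma walk_fst_const {s : Set ((Fin 1 ⊕ Fin 3) × Fin 3)}
    (hs : ∀ a ∈ s, a.1 ≠ Sum.inl 0)
    {x y : s}
    (p : (((completeBipartiteGraph (Fin 1) (Fin 3)) □ (SimpleGraph.pathGraph 3)).induce
      s).Walk x y) : (x : (Fin 1 ⊕ Fin 3) × Fin 3).1 = (y : (Fin 1 ⊕ Fin 3) × Fin 3).1 := by
  induction p with
  | nil => rfl
  | @cons u v w h p ih =>
    have h' := h
    simp only [SimpleGraph.comap_adj, SimpleGraph.boxProd_adj,
      Function.Embedding.coe_subtype] at h'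
    rcases h' with ⟨h1, _⟩ | ⟨_, h2⟩
    · -- bipartite adjacency between two non-center vertices: impossible
      exfalso
      have hu := hs u.1 u.2
      have hv := hs v.1 v.2
      rcases hu1 : (u : (Fin 1 ⊕ Fin 3) × Fin 3).1 with a | ju
      · exact hu (by rw [hu1, Fin.eq_zero a])
      rcases hv1 : (v : (Fin 1 ⊕ Fin 3) × Fin 3).1 with a | jv
      · exact hv (by rw [hv1, Fin.eq_zero a])
      rw [hu1, hv1] at h1
      simp at h1
    · rw [h2]; exact ih

/-- The Cartesian product `K_4 □ P_2` is not a minor of `K_{1,3} □ P_3`. -/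
theorem k4p2_not_minor_k13p3 :
    ¬ ((SimpleGraph.completeGraph (Fin 4)) □ (SimpleGraph.pathGraph 2)).IsMinorOf
        ((completeBipartiteGraph (Fin 1) (Fin 3)) □ (SimpleGraph.pathGraph 3)) := by
  rintro ⟨φ, hconn, hdisj, hadj⟩
  -- Step 1: every branch set contains a center vertex `(Sum.inl 0, i)`.
  have key : ∀ w : Fin 4 × Fin 2, ∃ i : Fin 3, ((Sum.inl 0 : Fin 1 ⊕ Fin 3), i) ∈ φ w := by
    intro w
    by_contra hno
    push_neg at hno
    have hleaf : ∀ a ∈ φ w, (a : (Fin 1 ⊕ Fin 3) × Fin 3).1 ≠ Sum.inl 0 := by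
      rintro ⟨x, i⟩ ha h
      rw [show x = Sum.inl 0 from h] at ha
      exact hno i ha
    have pe : ∀ (p : (Fin 1 ⊕ Fin 3) × Fin 3) (x : Fin 1 ⊕ Fin 3) (y : Fin 3),
        p.1 = x → p.2 = y → p = (x, y) := by
      rintro ⟨px, py⟩ x y h1 h2
      cases h1; cases h2; rfl
    -- a base point of the branch set
    obtain ⟨⟨a0, ha0⟩⟩ := (hconn w).nonempty
    obtain ⟨j0, ha0j⟩ : ∃ j0 : Fin 3, a0.1 = Sum.inr j0 := by
      rcases h : a0.1 with a | j
      · exact absurd (by rw [h, Fin.eq_zero a]) (hleaf a0 ha0)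
      · exact ⟨j, rfl⟩
    -- all elements of φ w have first coordinate `Sum.inr j0`
    have hconst : ∀ a ∈ φ w, a.1 = Sum.inr j0 := by
      intro a ha
      obtain ⟨p⟩ := (hconn w).preconnected ⟨a, ha⟩ ⟨a0, ha0⟩
      rw [← ha0j]
      exact walk_fst_const hleaf p
    -- for every neighbor w' of w, get a vertex b of φ w' adjacent to φ w,
    -- which is either a center above the column of φ w, or in the column itself.
    have hP : ∀ w' : Fin 4 × Fin 2,
        ((SimpleGraph.completeGraph (Fin 4)) □ (SimpleGraph.pathGraph 2)).Adj w w' →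
        ∃ b ∈ φ w',
          (b.1 = Sum.inl 0 ∧ ((Sum.inr j0 : Fin 1 ⊕ Fin 3), b.2) ∈ φ w) ∨
          (b.1 = Sum.inr j0 ∧ b ∉ φ w) := by
      intro w' hww'
      obtain ⟨a, ha, b, hb, hab⟩ := hadj hww'
      have haj : a.1 = Sum.inr j0 := hconst a ha
      have hbw : b ∉ φ w := fun hbmem =>
        Set.disjoint_left.mp (hdisj hww'.ne) hbmem hb
      refine ⟨b, hb, ?_⟩
      rw [SimpleGraph.boxProd_adj] at hab
      rcases hab with ⟨h1, h2⟩ | ⟨_, h2⟩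
      · left
        rw [haj] at h1
        rcases hb1 : b.1 with x | jb
        · refine ⟨by rw [Fin.eq_zero x], ?_⟩
          have : ((Sum.inr j0 : Fin 1 ⊕ Fin 3), b.2) = a := (pe a _ _ haj h2).symm
          rwa [this]
        · exfalso
          rw [hb1] at h1
          simp at h1
      · right
        exact ⟨h2 ▸ haj, hbw⟩
    -- distinct second coordinates
    have hne2 : ∀ b b' : (Fin 1 ⊕ Fin 3) × Fin 3,
        ((b.1 = Sum.inl 0 ∧ ((Sum.inr j0 : Fin 1 ⊕ Fin 3), b.2) ∈ φ w) ∨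
          (b.1 = Sum.inr j0 ∧ b ∉ φ w)) →
        ((b'.1 = Sum.inl 0 ∧ ((Sum.inr j0 : Fin 1 ⊕ Fin 3), b'.2) ∈ φ w) ∨
          (b'.1 = Sum.inr j0 ∧ b' ∉ φ w)) →
        b ≠ b' → b.2 ≠ b'.2 := by
      rintro b b' (⟨h1, h2⟩ | ⟨h1, h2⟩) (⟨h1', h2'⟩ | ⟨h1', h2'⟩) hne heq
      · exact hne (by rw [pe b _ _ h1 rfl, pe b' _ _ h1' rfl, heq])
      · exact h2' (by rw [pe b' _ _ h1' rfl, ← heq]; exact h2)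
      · exact h2 (by rw [pe b _ _ h1 rfl, heq]; exact h2')
      · exact hne (by rw [pe b _ _ h1 rfl, pe b' _ _ h1' rfl, heq])
    -- explicit neighbors of w in K4 □ P2
    obtain ⟨k, j⟩ := w
    have hk1 : ∀ k : Fin 4, k ≠ k + 1 := by decide
    have hk2 : ∀ k : Fin 4, k ≠ k + 2 := by decide
    have hk3 : ∀ k : Fin 4, k ≠ k + 3 := by decide
    have hk12 : ∀ k : Fin 4, k + 1 ≠ k + 2 := by decide
    have hk13 : ∀ k : Fin 4, k + 1 ≠ k + 3 := by decide
    have hk23 : ∀ k : Fin 4, k + 2 ≠ k + 3 := by decide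
    have hj1 : ∀ j : Fin 2, j ≠ j + 1 := by decide
    have hpj : ∀ j : Fin 2, (SimpleGraph.pathGraph 2).Adj j (j + 1) := by
      intro j
      rw [SimpleGraph.pathGraph_adj]
      revert j; decide
    have hadj1 : ((SimpleGraph.completeGraph (Fin 4)) □ (SimpleGraph.pathGraph 2)).Adj (k, j) (k + 1, j) :=
      Or.inl ⟨hk1 k, rfl⟩
    have hadj2 : ((SimpleGraph.completeGraph (Fin 4)) □ (SimpleGraph.pathGraph 2)).Adj (k, j) (k + 2, j) :=
      Or.inl ⟨hk2 k, rfl⟩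
    have hadj3 : ((SimpleGraph.completeGraph (Fin 4)) □ (SimpleGraph.pathGraph 2)).Adj (k, j) (k + 3, j) :=
      Or.inl ⟨hk3 k, rfl⟩
    have hadj4 : ((SimpleGraph.completeGraph (Fin 4)) □ (SimpleGraph.pathGraph 2)).Adj (k, j) (k, j + 1) :=
      Or.inr ⟨hpj j, rfl⟩
    obtain ⟨b1, hb1, hP1⟩ := hP _ hadj1
    obtain ⟨b2, hb2, hP2⟩ := hP _ hadj2
    obtain ⟨b3, hb3, hP3⟩ := hP _ hadj3
    obtain ⟨b4, hb4, hP4⟩ := hP _ hadj4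
    -- the four b's are pairwise distinct
    have hd : ∀ {w1 w2 : Fin 4 × Fin 2} {b b' : (Fin 1 ⊕ Fin 3) × Fin 3},
        w1 ≠ w2 → b ∈ φ w1 → b' ∈ φ w2 → b ≠ b' := by
      intro w1 w2 b b' hw hb hb' heq
      exact Set.disjoint_left.mp (hdisj hw) hb (heq ▸ hb')
    have n12 : (k + 1, j) ≠ ((k + 2 : Fin 4), j) := fun h => hk12 k (congrArg Prod.fst h)
    have n13 : (k + 1, j) ≠ ((k + 3 : Fin 4), j) := fun h => hk13 k (congrArg Prod.fst h)
    have n23 : (k + 2, j) ≠ ((k + 3 : Fin 4), j) := fun h => hk23 k (congrArg Prod.fst h)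
    have n14 : ((k + 1 : Fin 4), j) ≠ (k, j + 1) := fun h => hj1 j (congrArg Prod.snd h)
    have n24 : ((k + 2 : Fin 4), j) ≠ (k, j + 1) := fun h => hj1 j (congrArg Prod.snd h)
    have n34 : ((k + 3 : Fin 4), j) ≠ (k, j + 1) := fun h => hj1 j (congrArg Prod.snd h)
    have fin3 : ∀ x1 x2 x3 x4 : Fin 3, x1 = x2 ∨ x1 = x3 ∨ x1 = x4 ∨
        x2 = x3 ∨ x2 = x4 ∨ x3 = x4 := by decide
    rcases fin3 b1.2 b2.2 b3.2 b4.2 with h | h | h | h | h | h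
    · exact hne2 _ _ hP1 hP2 (hd n12 hb1 hb2) h
    · exact hne2 _ _ hP1 hP3 (hd n13 hb1 hb3) h
    · exact hne2 _ _ hP1 hP4 (hd n14 hb1 hb4) h
    · exact hne2 _ _ hP2 hP3 (hd n23 hb2 hb3) h
    · exact hne2 _ _ hP2 hP4 (hd n24 hb2 hb4) h
    · exact hne2 _ _ hP3 hP4 (hd n34 hb3 hb4) h
  -- Step 2: pigeonhole on the three center vertices
  choose c hc using key
  have hcinj : Function.Injective c := by
    intro w w' h
    by_contra hne
    exact Set.disjoint_left.mp (hdisj hne) (hc w) (h ▸ hc w')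
  have := Fintype.card_le_of_injective c hcinj
  simp at this
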